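/- Let X and A be Borel spaces, D a nonempty Borel subset of X×A with nonempty x-sections A(x), q a Borel measurable transition probability kernel from X×A to X, ω : X → [1,∞) Borel measurable, u : D → ℝ Borel measurable with |u(x,a)| ≤ zω(x) on D for some z > 0, and δ : ℝ → ℝ, γ : [0,∞) → [0,∞) such that: γ is increasing with γ(s) < s for s > 0; |δ(z₁) − δ(z₂)| ≤ γ(|z₁ − z₂|) for all reals; δ is increasing with δ(0) = 0; γ is subadditive and γ(ω(x)y) ≤ ω(x)γ(y) for x ∈ X, y > 0; ∫_X ω(y) q(dy|x,a) ≤ αω(x) on D with either α ≤ 1 or (α > 1 and αγ(s) < s for all s > 0). For a Borel measurable selector h (h : X → A with h(x) ∈ A(x)) let T_h v(x) = u(x,h(x)) + ∫_X δ(v(y)) q(dy|x,h(x)), and let v_h denote the unique Borel measurable fixed point of T_h with ‖v_h‖_ω < ∞. Let f and g be two Borel measurable selectors and let X₀ ⊂ X. If T_g v_f(x) > v_f(x) for all x ∈ X₀ and T_g v_f(x) = v_f(x) for all x ∉ X₀, then v_g(x) ≥ v_f(x) for all x ∈ X, and v_g(x) > v_f(x) for all x ∈ X₀. -/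

import Mathlib

open MeasureTheory ProbabilityTheory

/-- Howard's policy improvement step (Theorem 4(a) of the paper): if `g` improves
`f` on `X₀` (i.e. `T_g v_f > v_f` on `X₀` and `T_g v_f = v_f` off `X₀`), then
`v_g ≥ v_f` everywhere and `v_g > v_f` on `X₀`. -/
theorem howard_policy_improvement
    {X A : Type*}
    [MetricSpace X] [SecondCountableTopology X] [MeasurableSpace X] [BorelSpace X] [Nonempty X]
    [MetricSpace A] [SecondCountableTopology A] [MeasurableSpace A] [BorelSpace A] [Nonempty A]
    (D : Set (X × A)) (hD : MeasurableSet D) (hDne : ∀ x : X, ∃ a : A, (x, a) ∈ D)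
    (q : Kernel (X × A) X) [IsMarkovKernel q]
    (ω : X → ℝ) (hωm : Measurable ω) (hω1 : ∀ x, 1 ≤ ω x)
    (u : X × A → ℝ) (hu : Measurable u)
    (z : ℝ) (hz : 0 < z) (huω : ∀ p ∈ D, |u p| ≤ z * ω p.1)
    (δ : ℝ → ℝ) (γ : ℝ → ℝ)
    (hγm : MonotoneOn γ (Set.Ici 0)) (hγ0 : ∀ s : ℝ, 0 ≤ s → 0 ≤ γ s)
    (hγlt : ∀ s : ℝ, 0 < s → γ s < s)
    (hδγ : ∀ z₁ z₂ : ℝ, |δ z₁ - δ z₂| ≤ γ |z₁ - z₂|)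
    (hδm : Monotone δ) (hδ0 : δ 0 = 0)
    (hγsub : ∀ y : ℝ, 0 ≤ y → ∀ s : ℝ, 0 ≤ s → γ (y + s) ≤ γ y + γ s)
    (hγω : ∀ x : X, ∀ y : ℝ, 0 < y → γ (ω x * y) ≤ ω x * γ y)
    (α : ℝ) (hα : 0 < α)
    (hωq : ∀ p ∈ D, Integrable ω (q p) ∧ ∫ y, ω y ∂(q p) ≤ α * ω p.1)
    (hαcase : α ≤ 1 ∨ (1 < α ∧ ∀ s : ℝ, 0 < s → α * γ s < s))
    (f g : X → A) (hf : Measurable f) (hfD : ∀ x, (x, f x) ∈ D)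
    (hg : Measurable g) (hgD : ∀ x, (x, g x) ∈ D)
    (vf : X → ℝ) (hvf : Measurable vf) (hvfb : ∃ c : ℝ, ∀ x, |vf x| ≤ c * ω x)
    (hvffix : ∀ x, u (x, f x) + ∫ y, δ (vf y) ∂(q (x, f x)) = vf x)
    (vg : X → ℝ) (hvg : Measurable vg) (hvgb : ∃ c : ℝ, ∀ x, |vg x| ≤ c * ω x)
    (hvgfix : ∀ x, u (x, g x) + ∫ y, δ (vg y) ∂(q (x, g x)) = vg x)
    (X₀ : Set X)
    (himp : ∀ x ∈ X₀, vf x < u (x, g x) + ∫ y, δ (vf y) ∂(q (x, g x)))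
    (heq : ∀ x ∉ X₀, u (x, g x) + ∫ y, δ (vf y) ∂(q (x, g x)) = vf x) :
    (∀ x, vf x ≤ vg x) ∧ ∀ x ∈ X₀, vf x < vg x := by
  classical
  obtain ⟨cf, hcf⟩ := hvfb
  obtain ⟨cg, hcg⟩ := hvgb
  have hωpos : ∀ x, (0:ℝ) < ω x := fun x => lt_of_lt_of_le one_pos (hω1 x)
  have hωint : ∀ x, Integrable ω (q (x, g x)) := fun x => (hωq _ (hgD x)).1
  have hωIle : ∀ x, ∫ y, ω y ∂(q (x, g x)) ≤ α * ω x := fun x => (hωq _ (hgD x)).2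
  have hδabs : ∀ t : ℝ, |δ t| ≤ γ |t| := by
    intro t
    simpa [hδ0] using hδγ t 0
  set x₀ : X := Classical.arbitrary X with hx₀
  -- bounds imply nonnegativity of constants and bounds on δ ∘ v
  have hδbound : ∀ (v : X → ℝ) (c : ℝ), (∀ x, |v x| ≤ c * ω x) →
      ∀ y, |δ (v y)| ≤ γ (c + 1) * ω y := by
    intro v c hc y
    have hc0 : 0 ≤ c := by
      have h1 := hc x₀
      nlinarith [abs_nonneg (v x₀), hωpos x₀]
    have h1 : |v y| ≤ ω y * (c + 1) := by nlinarith [hc y, hωpos y]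
    have h2 : γ |v y| ≤ γ (ω y * (c + 1)) :=
      hγm (Set.mem_Ici.mpr (abs_nonneg _)) (mul_nonneg (hωpos y).le (by linarith)) h1
    have h3 : γ (ω y * (c + 1)) ≤ ω y * γ (c + 1) := hγω y (c + 1) (by linarith)
    calc |δ (v y)| ≤ γ |v y| := hδabs _
      _ ≤ ω y * γ (c + 1) := le_trans h2 h3
      _ = γ (c + 1) * ω y := mul_comm _ _
  have hintf : ∀ x, Integrable (fun y => δ (vf y)) (q (x, g x)) := by
    intro x
    refine Integrable.mono ((hωint x).const_mul (γ (cf + 1)))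
      ((hδm.measurable.comp hvf).aestronglyMeasurable) ?_
    refine Filter.Eventually.of_forall fun y => ?_
    have h1 := hδbound vf cf hcf y
    have h2 : 0 ≤ γ (cf + 1) * ω y := le_trans (abs_nonneg _) h1
    rw [Real.norm_eq_abs, Real.norm_eq_abs, abs_of_nonneg h2]; exact h1
  have hintg : ∀ x, Integrable (fun y => δ (vg y)) (q (x, g x)) := by
    intro x
    refine Integrable.mono ((hωint x).const_mul (γ (cg + 1)))
      ((hδm.measurable.comp hvg).aestronglyMeasurable) ?_
    refine Filter.Eventually.of_forall fun y => ?_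
    have h1 := hδbound vg cg hcg y
    have h2 : 0 ≤ γ (cg + 1) * ω y := le_trans (abs_nonneg _) h1
    rw [Real.norm_eq_abs, Real.norm_eq_abs, abs_of_nonneg h2]; exact h1
  have hle : ∀ x, vf x ≤ u (x, g x) + ∫ y, δ (vf y) ∂(q (x, g x)) := by
    intro x
    by_cases hx : x ∈ X₀
    · exact le_of_lt (himp x hx)
    · exact (heq x hx).ge
  set d : X → ℝ := fun x => max (vf x - vg x) 0 with hd
  have hd0 : ∀ x, 0 ≤ d x := fun x => le_max_right _ _
  set S : Set ℝ := Set.range (fun x => d x / ω x) with hS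
  have hSne : S.Nonempty := Set.range_nonempty _
  have hSbdd : BddAbove S := by
    refine ⟨cf + cg, ?_⟩
    rintro r ⟨x, rfl⟩
    have h1 : d x ≤ (cf + cg) * ω x := by
      have h2 : |vf x - vg x| ≤ |vf x| + |vg x| := abs_sub _ _
      have h3 : vf x - vg x ≤ |vf x - vg x| := le_abs_self _
      have h4 : 0 ≤ (cf + cg) * ω x := by nlinarith [hcf x, hcg x, abs_nonneg (vf x), abs_nonneg (vg x)]
      have h5 : vf x - vg x ≤ (cf + cg) * ω x := by nlinarith [hcf x, hcg x]
      exact max_le h5 h4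
    rw [div_le_iff₀ (hωpos x)]
    linarith [h1]
  set c : ℝ := sSup S with hc
  have hcle : ∀ x, d x ≤ c * ω x := by
    intro x
    have h1 : d x / ω x ≤ c := le_csSup hSbdd ⟨x, rfl⟩
    have := mul_le_mul_of_nonneg_right h1 (hωpos x).le
    rwa [div_mul_cancel₀ _ (hωpos x).ne'] at this
  have hc0 : 0 ≤ c := by
    have h1 : d x₀ / ω x₀ ≤ c := le_csSup hSbdd ⟨x₀, rfl⟩
    have h2 : 0 ≤ d x₀ / ω x₀ := div_nonneg (hd0 x₀) (hωpos x₀).le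
    linarith
  -- main contraction estimate when c > 0
  have hkey : ¬ (0 < c) := by
    intro hcpos
    have hγc0 : 0 ≤ γ c := hγ0 c hcpos.le
    have hmain : ∀ x, vf x - vg x ≤ α * γ c * ω x := by
      intro x
      have hpt : ∀ y, δ (vf y) - δ (vg y) ≤ γ c * ω y := by
        intro y
        by_cases hyle : vf y ≤ vg y
        · have := hδm hyle
          have : δ (vf y) - δ (vg y) ≤ 0 := by linarith
          nlinarith [hωpos y]
        · push_neg at hyle
          have hdy : d y = vf y - vg y := max_eq_left (by linarith)
          calc δ (vf y) - δ (vg y) ≤ |δ (vf y) - δ (vg y)| := le_abs_self _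
            _ ≤ γ |vf y - vg y| := hδγ _ _
            _ = γ (d y) := by rw [abs_of_pos (by linarith : (0:ℝ) < vf y - vg y), hdy]
            _ ≤ γ (ω y * c) := hγm (hd0 y) (mul_nonneg (hωpos y).le hcpos.le)
                (by rw [mul_comm]; exact hcle y)
            _ ≤ ω y * γ c := hγω y c hcpos
            _ = γ c * ω y := mul_comm _ _
      have hI : ∫ y, δ (vf y) ∂(q (x, g x)) - ∫ y, δ (vg y) ∂(q (x, g x))
          ≤ γ c * ∫ y, ω y ∂(q (x, g x)) := by
        rw [← integral_sub (hintf x) (hintg x), ← integral_const_mul]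
        exact integral_mono ((hintf x).sub (hintg x)) ((hωint x).const_mul _)
          fun y => hpt y
      have h2 := hle x
      have h3 := hvgfix x
      have h4 : γ c * ∫ y, ω y ∂(q (x, g x)) ≤ γ c * (α * ω x) :=
        mul_le_mul_of_nonneg_left (hωIle x) hγc0
      nlinarith
    have hcle2 : c ≤ α * γ c := by
      refine csSup_le hSne ?_
      rintro r ⟨x, rfl⟩
      have h1 : d x ≤ α * γ c * ω x := by
        have h2 : 0 ≤ α * γ c * ω x := mul_nonneg (mul_nonneg hα.le hγc0) (hωpos x).le
        exact max_le (hmain x) h2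
      rw [div_le_iff₀ (hωpos x)]
      linarith
    rcases hαcase with hα1 | ⟨_, hα2⟩
    · have h1 : γ c < c := hγlt c hcpos
      nlinarith
    · have h2 := hα2 c hcpos
      linarith
  push_neg at hkey
  have hfg : ∀ x, vf x ≤ vg x := by
    intro x
    have h1 : d x ≤ c * ω x := hcle x
    have h2 : c * ω x ≤ 0 := mul_nonpos_of_nonpos_of_nonneg hkey (hωpos x).le
    have h3 : vf x - vg x ≤ d x := le_max_left _ _
    linarith
  refine ⟨hfg, fun x hx => ?_⟩
  have h1 : ∫ y, δ (vf y) ∂(q (x, g x)) ≤ ∫ y, δ (vg y) ∂(q (x, g x)) :=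
    integral_mono (hintf x) (hintg x) fun y => hδm (hfg y)
  have h2 := himp x hx
  have h3 := hvgfix x
  linarith
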